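/- Let k be a perfect field and f ∈ k[x] a monic irreducible polynomial of degree d, and let K = k[x]/(f). Then for every integer m ≥ 1 there exists a ring isomorphism k[x]/(f^m) ≅ K[u]/(u^m). -/

import Mathlib

open Polynomial Module

theorem hensel_truncated_iso (k : Type) [Field k] [PerfectField k]
    (f : Polynomial k) (hmonic : f.Monic) (hirr : Irreducible f)
    (m : ℕ) (hm : 1 ≤ m) :
    Nonempty ((Polynomial k ⧸ Ideal.span {f ^ m}) ≃+*
      (Polynomial (AdjoinRoot f) ⧸
        Ideal.span {(Polynomial.X : Polynomial (AdjoinRoot f)) ^ m})) := by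
  classical
  haveI : Fact (Irreducible f) := ⟨hirr⟩
  let K := AdjoinRoot f
  let S := AdjoinRoot ((X : K[X]) ^ m)
  show Nonempty (AdjoinRoot (f ^ m) ≃+* S)
  have hf0 : f ≠ 0 := hirr.ne_zero
  have hXm0 : ((X : K[X]) ^ m) ≠ 0 := pow_ne_zero _ X_ne_zero
  let α : K := AdjoinRoot.root f
  let u : S := AdjoinRoot.root ((X : K[X]) ^ m)
  have hum : u ^ m = 0 := by
    have := AdjoinRoot.eval₂_root ((X : K[X]) ^ m)
    simpa using this
  -- F = image of f over K, has root α
  set F : K[X] := f.map (algebraMap k K) with hF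
  have hFα : F.eval α = 0 := by
    rw [hF, eval_map, AdjoinRoot.algebraMap_eq]
    exact AdjoinRoot.eval₂_root f
  obtain ⟨g, hg⟩ : (X - C α) ∣ F := dvd_iff_isRoot.mpr hFα
  have hsep : F.Separable := (PerfectField.separable_of_irreducible hirr).map
  have hgα : g.eval α ≠ 0 := by
    intro h0
    obtain ⟨h, hh⟩ : (X - C α) ∣ g := dvd_iff_isRoot.mpr h0
    exact (Polynomial.not_isUnit_X_sub_C α)
      (hsep.squarefree (X - C α) ⟨h, by rw [hg, hh]; ring⟩)
  -- the element t = α + u of S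
  let t : S := algebraMap K S α + u
  have ht1 : aeval t (X - C α : K[X]) = u := by
    simp [t]
  set G : S := aeval t g with hG
  have hFt : aeval t F = u * G := by rw [hg, map_mul, ht1]
  -- G is a unit
  have hGunit : IsUnit G := by
    obtain ⟨w, hw⟩ : u ∣ (G - algebraMap K S (g.eval α)) := by
      have h2 : (X - C α) ∣ (g - C (g.eval α)) := dvd_iff_isRoot.mpr (by simp)
      have := map_dvd (aeval t) h2
      rw [map_sub, map_sub, aeval_X, aeval_C, aeval_C] at this
      have ht0 : t - algebraMap K S α = u := by simp [t]
      rwa [ht0] at this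
    have hGeq : G = algebraMap K S (g.eval α) + u * w := by
      rw [← hw]; ring
    have hc : IsUnit (algebraMap K S (g.eval α)) :=
      (isUnit_iff_ne_zero.mpr hgα).map (algebraMap K S)
    have hnil : IsNilpotent (u * w) := ⟨m, by rw [mul_pow, hum, zero_mul]⟩
    rw [hGeq, add_comm]
    exact hnil.isUnit_add_right_of_commute hc (Commute.all _ _)
  -- aeval over k relates to aeval over K
  have haeval : ∀ p : k[X], (aeval t) p = (aeval t) (p.map (algebraMap k K)) := by
    intro p
    rw [aeval_map_algebraMap]
  have hzero : (aeval t) (f ^ m) = 0 := by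
    rw [map_pow, haeval f, ← hF, hFt, mul_pow, hum, zero_mul]
  let φ : AdjoinRoot (f ^ m) →ₐ[k] S := AdjoinRoot.liftAlgHom (f ^ m) (Algebra.ofId k S) t hzero
  -- injectivity
  have hpow : ∀ i : ℕ, i < m → (aeval t) (f ^ i) ≠ 0 := by
    intro i hi h0
    rw [map_pow, haeval f, ← hF, hFt, mul_pow] at h0
    have hu0 : u ^ i = 0 := by
      have := hGunit.pow i
      obtain ⟨v, hv⟩ := this
      calc u ^ i = u ^ i * G ^ i * (↑v⁻¹) := by rw [← hv, Units.mul_inv_cancel_right]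
        _ = 0 := by rw [h0, zero_mul]
    have : ((X : K[X]) ^ m) ∣ (X : K[X]) ^ i := by
      rw [← AdjoinRoot.mk_eq_zero]
      simpa using hu0
    have hmi : m ≤ i := (pow_dvd_pow_iff X_ne_zero not_isUnit_X).mp this
    omega
  have hinj : Function.Injective φ := by
    rw [injective_iff_map_eq_zero]
    intro x hx
    obtain ⟨p, rfl⟩ := AdjoinRoot.mk_surjective x
    rw [show φ (AdjoinRoot.mk (f ^ m) p) = aeval t p from rfl] at hx
    rw [AdjoinRoot.mk_eq_zero]
    set I : Ideal k[X] := RingHom.ker ((aeval t : k[X] →ₐ[k] S) : k[X] →+* S) with hI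
    obtain ⟨h, hh⟩ : ∃ h, I = Ideal.span {h} :=
      (IsPrincipalIdealRing.principal I).principal
    have hfm : f ^ m ∈ I := hzero
    have hdvd : h ∣ f ^ m := by rwa [hh, Ideal.mem_span_singleton] at hfm
    obtain ⟨i, him, hassoc⟩ := (dvd_prime_pow hirr.prime m).mp hdvd
    have hfi : f ^ i ∈ I := by
      rw [hh, Ideal.mem_span_singleton]
      exact hassoc.dvd
    have him' : i = m := by
      by_contra hne
      exact hpow i (lt_of_le_of_ne him hne) hfi
    have hpI : p ∈ I := hx
    rw [hh, Ideal.mem_span_singleton] at hpI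
    calc f ^ m = f ^ i := by rw [him']
      _ ∣ p := dvd_trans hassoc.symm.dvd hpI
  -- dimension count
  haveI : FiniteDimensional k (AdjoinRoot (f ^ m)) :=
    (AdjoinRoot.powerBasis (pow_ne_zero m hf0)).finite
  haveI : FiniteDimensional k K := (AdjoinRoot.powerBasis hf0).finite
  haveI : FiniteDimensional K S := (AdjoinRoot.powerBasis hXm0).finite
  haveI : FiniteDimensional k S := FiniteDimensional.trans k K S
  have h1 : finrank k (AdjoinRoot (f ^ m)) = (f ^ m).natDegree := by
    rw [(AdjoinRoot.powerBasis (pow_ne_zero m hf0)).finrank, AdjoinRoot.powerBasis_dim]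
  have h2 : finrank K S = m := by
    rw [(AdjoinRoot.powerBasis hXm0).finrank, AdjoinRoot.powerBasis_dim, natDegree_X_pow]
  have h3 : finrank k K = f.natDegree := by
    rw [(AdjoinRoot.powerBasis hf0).finrank, AdjoinRoot.powerBasis_dim]
  have hrank : finrank k (AdjoinRoot (f ^ m)) = finrank k S := by
    rw [h1, natDegree_pow, ← Module.finrank_mul_finrank k K S, h2, h3, mul_comm]
  have hsurj : Function.Surjective φ := by
    have := (LinearMap.injective_iff_surjective_of_finrank_eq_finrank hrank
      (f := φ.toLinearMap)).mp hinj
    exact this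
  exact ⟨RingEquiv.ofBijective (φ : AdjoinRoot (f ^ m) →+* S) ⟨hinj, hsurj⟩⟩
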